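/- arXiv:2410.05207 — 3 statements merged into one kernel-verified Lean document; each statement's English description precedes it below -/
import Mathlib

section
/- For all positive integers n and k with n >= k, sum_{i=k}^{n} S(n-1, i-1) * s(i, k) / i = (1/n) * binom(n, k) * B_{n-k}. -/
open Finset

/-- Stirling numbers of the second kind. -/
def stirling2 : ℕ → ℕ → ℕ
  | 0, 0 => 1
  | 0, _ + 1 => 0
  | _ + 1, 0 => 0
  | n + 1, k + 1 => stirling2 n k + (k + 1) * stirling2 n (k + 1)

/-- Signed Stirling numbers of the first kind. -/
def stirling1 : ℕ → ℕ → ℤ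
  | 0, 0 => 1
  | 0, _ + 1 => 0
  | n + 1, 0 => -(n : ℤ) * stirling1 n 0
  | n + 1, k + 1 => stirling1 n k - (n : ℤ) * stirling1 n (k + 1)

/-- Bernoulli numbers of the second kind: `∫₀¹ x(x-1)⋯(x-n+1) dx`. -/
noncomputable def bernoulliStar (n : ℕ) : ℝ :=
  ∫ x in (0:ℝ)..1, (descPochhammer ℝ n).eval x

section Aux
open Polynomial

lemma coeff_desc (m k : ℕ) : (descPochhammer ℚ m).coeff k = (stirling1 m k : ℚ) := by
  induction m generalizing k with
  | zero =>
    cases k with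
    | zero => simp [stirling1]
    | succ k => simp [stirling1, coeff_one, Nat.succ_ne_zero]
  | succ m ih =>
    rw [descPochhammer_succ_right]
    have hC : ((m : ℚ[X])) = C (m : ℚ) := by simp
    cases k with
    | zero =>
      rw [hC, mul_coeff_zero, coeff_sub, coeff_X_zero, coeff_C]
      simp only [if_pos rfl, zero_sub, mul_neg, ih 0, stirling1]
      push_cast
      ring
    | succ k =>
      rw [hC, coeff_mul_X_sub_C, ih k, ih (k+1)]
      simp only [stirling1]
      push_cast
      ring

lemma stirling1_eq_zero {m k : ℕ} (h : m < k) : stirling1 m k = 0 := by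
  have := coeff_desc m k
  rw [Polynomial.coeff_eq_zero_of_natDegree_lt (by rwa [descPochhammer_natDegree])] at this
  exact_mod_cast this.symm

lemma stirling2_eq_zero {m k : ℕ} (h : m < k) : stirling2 m k = 0 := by
  induction m generalizing k with
  | zero => cases k with
    | zero => omega
    | succ k => rfl
  | succ m ih =>
    cases k with
    | zero => omega
    | succ k =>
      rw [stirling2, ih (by omega), ih (by omega)]
      simp

lemma pow_eq_sum_stirling2 (m : ℕ) :
    (X : ℚ[X]) ^ m = ∑ i ∈ range (m+1), C (stirling2 m i : ℚ) * descPochhammer ℚ i := by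
  induction m with
  | zero => simp [stirling2]
  | succ m ih =>
    have key : ∀ i : ℕ, X * descPochhammer ℚ i
        = descPochhammer ℚ (i+1) + C (i : ℚ) * descPochhammer ℚ i := by
      intro i
      rw [descPochhammer_succ_right]
      have : ((i : ℚ[X])) = C (i : ℚ) := by simp
      rw [this]
      ring
    calc (X : ℚ[X]) ^ (m+1) = X * X ^ m := by ring
      _ = ∑ i ∈ range (m+1), C (stirling2 m i : ℚ) *
            (descPochhammer ℚ (i+1) + C (i : ℚ) * descPochhammer ℚ i) := by
          rw [ih, Finset.mul_sum]
          exact Finset.sum_congr rfl fun i _ => by rw [← key i]; ring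
      _ = (∑ i ∈ range (m+1), C (stirling2 m i : ℚ) * descPochhammer ℚ (i+1))
          + ∑ i ∈ range (m+1), C ((i : ℚ) * stirling2 m i) * descPochhammer ℚ i := by
          rw [← Finset.sum_add_distrib]
          exact Finset.sum_congr rfl fun i _ => by simp; ring
      _ = ∑ i ∈ range (m+2), C (stirling2 (m+1) i : ℚ) * descPochhammer ℚ i := by
          rw [Finset.sum_range_succ' (fun i => C (stirling2 (m+1) i : ℚ) * descPochhammer ℚ i) (m+1)]
          have h0 : C (stirling2 (m+1) 0 : ℚ) * descPochhammer ℚ 0 = 0 := by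
            simp [stirling2]
          rw [h0, add_zero]
          have h2 : ∑ i ∈ range (m+1), C ((i : ℚ) * stirling2 m i) * descPochhammer ℚ i
              = ∑ i ∈ range (m+1), C (((i:ℚ)+1) * stirling2 m (i+1)) * descPochhammer ℚ (i+1) := by
            rw [Finset.sum_range_succ' (fun i => C ((i : ℚ) * stirling2 m i) * descPochhammer ℚ i) m]
            simp only [Nat.cast_zero, zero_mul, map_zero, zero_mul, add_zero]
            rw [Finset.sum_range_succ]
            rw [stirling2_eq_zero (by omega : m < m + 1)]
            push_cast
            simp
          rw [h2, ← Finset.sum_add_distrib]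
          refine Finset.sum_congr rfl fun i _ => ?_
          have : (stirling2 (m+1) (i+1) : ℚ)
              = (stirling2 m i : ℚ) + ((i:ℚ)+1) * stirling2 m (i+1) := by
            rw [stirling2]; push_cast; ring
          rw [this]
          simp only [map_add]
          ring

lemma sum_desc_eval (i N : ℕ) :
    ∑ x ∈ range N, (descPochhammer ℚ i).eval (x : ℚ)
      = (descPochhammer ℚ (i+1)).eval (N : ℚ) / (i+1) := by
  induction N with
  | zero => simp
  | succ N ih =>
    rw [Finset.sum_range_succ, ih]
    have h1 : (descPochhammer ℚ (i+1)).eval ((N:ℚ)+1)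
        = ((N:ℚ)+1) * (descPochhammer ℚ i).eval (N : ℚ) := by
      rw [descPochhammer_succ_left]
      simp [eval_comp]
    have h2 : (descPochhammer ℚ (i+1)).eval (N : ℚ)
        = (descPochhammer ℚ i).eval (N : ℚ) * ((N:ℚ) - i) := by
      rw [descPochhammer_succ_right]
      simp
    have hne : ((i:ℚ)+1) ≠ 0 := by positivity
    push_cast
    rw [h1, h2]
    field_simp
    ring

lemma main_aux (m k : ℕ) (hk : 0 < k) (hkn : k ≤ m + 1) :
    ∑ i ∈ Finset.Icc k (m+1), (stirling2 m (i - 1) : ℚ) * (stirling1 i k : ℚ) / i =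
      1 / (m+1) * (((m+1).choose k : ℕ) : ℚ) * _root_.bernoulli (m+1-k) := by
  set Q : ℚ[X] := ∑ i ∈ range (m+1),
    C ((stirling2 m i : ℚ) / (i+1)) * descPochhammer ℚ (i+1) with hQ
  set R : ℚ[X] := ∑ j ∈ range (m+1),
    C (_root_.bernoulli j * ((m+1).choose j) / (m+1)) * X ^ (m+1-j) with hR
  have hQR : Q = R := by
    have heval : ∀ N : ℕ, Q.eval (N : ℚ) = R.eval (N : ℚ) := by
      intro N
      have hx : ∀ x : ℕ, (x:ℚ)^m
          = ∑ i ∈ range (m+1), (stirling2 m i : ℚ) * (descPochhammer ℚ i).eval (x:ℚ) := by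
        intro x
        have := congrArg (eval (x:ℚ)) (pow_eq_sum_stirling2 m)
        simpa [eval_finset_sum] using this
      have hq : Q.eval (N : ℚ) = ∑ x ∈ range N, (x : ℚ) ^ m := by
        rw [hQ, eval_finset_sum]
        simp only [eval_mul, eval_C]
        calc ∑ i ∈ range (m+1), (stirling2 m i:ℚ)/(i+1) * (descPochhammer ℚ (i+1)).eval (N:ℚ)
            = ∑ i ∈ range (m+1), ∑ x ∈ range N,
                (stirling2 m i : ℚ) * (descPochhammer ℚ i).eval (x:ℚ) := by
              refine Finset.sum_congr rfl fun i _ => ?_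
              rw [← Finset.mul_sum, sum_desc_eval]
              push_cast
              ring
          _ = ∑ x ∈ range N, (x:ℚ)^m := by
              rw [Finset.sum_comm]
              exact Finset.sum_congr rfl fun x _ => (hx x).symm
      have hr : R.eval (N : ℚ) = ∑ x ∈ range N, (x : ℚ) ^ m := by
        rw [hR, eval_finset_sum, sum_range_pow]
        refine Finset.sum_congr rfl fun j _ => ?_
        rw [eval_mul, eval_C, eval_pow, eval_X]
        push_cast
        ring
      rw [hq, hr]
    have hz : Q - R = 0 := by
      apply Polynomial.eq_zero_of_infinite_isRoot
      apply Set.Infinite.mono (s := Set.range (Nat.cast : ℕ → ℚ))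
      · rintro x ⟨N, rfl⟩
        simp [Polynomial.IsRoot, heval N]
      · exact Set.infinite_range_of_injective Nat.cast_injective
    exact sub_eq_zero.mp hz
  have hc := congrArg (fun p : ℚ[X] => p.coeff k) hQR
  have hcQ : Q.coeff k = ∑ i ∈ range (m+1), (stirling2 m i : ℚ) * (stirling1 (i+1) k : ℚ) / (i+1) := by
    rw [hQ, finset_sum_coeff]
    refine Finset.sum_congr rfl fun i _ => ?_
    rw [coeff_C_mul, coeff_desc]
    ring
  have hcR : R.coeff k = _root_.bernoulli (m+1-k) * ((m+1).choose k : ℚ) / (m+1) := by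
    rw [hR, finset_sum_coeff]
    rw [Finset.sum_eq_single (m+1-k)]
    · rw [coeff_C_mul, coeff_X_pow, if_pos (by omega), mul_one,
        Nat.choose_symm hkn]
    · intro j hj hne
      rw [coeff_C_mul, coeff_X_pow, if_neg (by simp at hj; omega), mul_zero]
    · intro h
      exact absurd (by simp; omega : m+1-k ∈ range (m+1)) h
  -- rewrite LHS as the range sum
  have hL : ∑ i ∈ Finset.Icc k (m+1), (stirling2 m (i - 1) : ℚ) * (stirling1 i k : ℚ) / i
      = ∑ i ∈ range (m+1), (stirling2 m i : ℚ) * (stirling1 (i+1) k : ℚ) / (i+1) := by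
    have hsub : Finset.Icc k (m+1) ⊆ range (m+2) := by
      intro i hi
      simp only [Finset.mem_Icc] at hi
      simp only [Finset.mem_range]
      omega
    have hz : ∀ i ∈ range (m+2), i ∉ Finset.Icc k (m+1) →
        (stirling2 m (i - 1) : ℚ) * (stirling1 i k : ℚ) / i = 0 := by
      intro i hi hni
      simp only [Finset.mem_range] at hi
      simp only [Finset.mem_Icc, not_and, not_le] at hni
      have hik : i < k := by omega
      rw [stirling1_eq_zero hik]
      simp
    rw [Finset.sum_subset hsub hz]
    rw [Finset.sum_range_succ'
      (fun i => (stirling2 m (i - 1) : ℚ) * (stirling1 i k : ℚ) / i) (m+1)]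
    have h0 : (stirling2 m (0 - 1) : ℚ) * (stirling1 0 k : ℚ) / (0:ℕ) = 0 := by
      simp
    rw [h0, add_zero]
    refine Finset.sum_congr rfl fun i _ => ?_
    simp only [Nat.add_sub_cancel]
    push_cast
    ring
  rw [hL, ← hcQ, hc, hcR]
  ring
end Aux

theorem stmt5 (n k : ℕ) (hn : 0 < n) (hk : 0 < k) (hkn : k ≤ n) :
    ∑ i ∈ Finset.Icc k n, (stirling2 (n - 1) (i - 1) : ℚ) * (stirling1 i k : ℚ) / i =
      1 / n * (n.choose k : ℚ) * bernoulli (n - k) := by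
  obtain ⟨m, rfl⟩ : ∃ m, n = m + 1 := ⟨n - 1, by omega⟩
  have := main_aux m k hk hkn
  simpa using this
end

section
/- For all nonnegative integers n, the Bernoulli number satisfies B_n = sum_{i=0}^{n} (-1)^i * (i! / (i+1)) * S(n, i). -/
open Finset

lemma stirling2_eq_zero_of_lt : ∀ (n k : ℕ), n < k → stirling2 n k = 0
  | 0, _ + 1, _ => rfl
  | n + 1, k + 1, h => by
      have h1 : n < k := Nat.lt_of_succ_lt_succ h
      have h2 : n < k + 1 := Nat.lt_of_succ_lt h
      simp [stirling2, stirling2_eq_zero_of_lt n k h1, stirling2_eq_zero_of_lt n (k+1) h2]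

lemma stirling2_zero_right (n : ℕ) : stirling2 n 0 = if n = 0 then 1 else 0 := by
  cases n <;> rfl

/-- Binomial-Stirling identity: `∑_{k≤m} C(m,k) S(k,i) = S(m+1,i+1)`. -/
lemma binom_stirling (m : ℕ) : ∀ i : ℕ,
    ∑ k ∈ range (m + 1), m.choose k * stirling2 k i = stirling2 (m + 1) (i + 1) := by
  induction m with
  | zero =>
      intro i
      simp [stirling2, stirling2_eq_zero_of_lt 0 (i+1) (Nat.succ_pos i)]
  | succ m ih =>
      intro i
      rw [Finset.sum_range_succ']
      have e1 : ∀ k ∈ range (m + 1), (m+1).choose (k+1) * stirling2 (k+1) i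
          = m.choose k * stirling2 (k+1) i + m.choose (k+1) * stirling2 (k+1) i := by
        intro k _
        rw [Nat.choose_succ_succ, Nat.add_mul]
      rw [Finset.sum_congr rfl e1, Finset.sum_add_distrib]
      have hB : (∑ k ∈ range (m + 1), m.choose (k+1) * stirling2 (k+1) i)
          + (m+1).choose 0 * stirling2 0 i = stirling2 (m + 1) (i + 1) := by
        have : (∑ k ∈ range (m + 1), m.choose (k+1) * stirling2 (k+1) i)
            + (m+1).choose 0 * stirling2 0 i
            = ∑ k ∈ range (m + 2), m.choose k * stirling2 k i := by
          rw [Finset.sum_range_succ' (fun k => m.choose k * stirling2 k i) (m+1)]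
          simp
        rw [this, Finset.sum_range_succ, Nat.choose_succ_self, Nat.zero_mul, Nat.add_zero,
          ih i]
      have hA : ∑ k ∈ range (m + 1), m.choose k * stirling2 (k+1) i
          = stirling2 (m + 1 + 1) (i + 1) - stirling2 (m + 1) (i + 1) ∧
          stirling2 (m + 1) (i + 1) ≤ stirling2 (m + 1 + 1) (i + 1) := by
        cases i with
        | zero =>
            constructor
            · have : ∀ k ∈ range (m + 1), m.choose k * stirling2 (k+1) 0 = 0 := by
                intro k _; simp [stirling2]
              rw [Finset.sum_congr rfl this, Finset.sum_const_zero]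
              have h2 : stirling2 (m + 1 + 1) 1 = stirling2 (m + 1) 0 + 1 * stirling2 (m + 1) 1 := rfl
              rw [h2, stirling2_zero_right]
              simp
            · have h2 : stirling2 (m + 1 + 1) 1 = stirling2 (m + 1) 0 + 1 * stirling2 (m + 1) 1 := rfl
              rw [h2, stirling2_zero_right]
              simp
        | succ j =>
            have e2 : ∀ k ∈ range (m + 1), m.choose k * stirling2 (k+1) (j+1)
                = m.choose k * stirling2 k j + (j+1) * (m.choose k * stirling2 k (j+1)) := by
              intro k _
              have : stirling2 (k+1) (j+1) = stirling2 k j + (j+1) * stirling2 k (j+1) := rfl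
              rw [this]; ring
            rw [Finset.sum_congr rfl e2, Finset.sum_add_distrib, ← Finset.mul_sum, ih j, ih (j+1)]
            have h2 : stirling2 (m + 1 + 1) (j + 1 + 1)
                = stirling2 (m + 1) (j+1) + (j+2) * stirling2 (m + 1) (j+2) := rfl
            constructor
            · rw [h2]; ring_nf; omega
            · rw [h2]; nlinarith [Nat.zero_le (stirling2 (m+1) (j+2))]
      omega

/-- The key alternating-sum identity. -/
lemma key_sum (m : ℕ) :
    ∑ i ∈ range (m + 1), (-1:ℚ)^i * i.factorial * stirling2 (m + 1) (i + 1)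
      = if m = 0 then 1 else 0 := by
  have unfold : ∀ i ∈ range (m + 1), (-1:ℚ)^i * i.factorial * stirling2 (m + 1) (i + 1)
      = (-1:ℚ)^i * i.factorial * stirling2 m i
        + (-1:ℚ)^i * i.factorial * ((i:ℚ)+1) * stirling2 m (i+1) := by
    intro i _
    have h : stirling2 (m+1) (i+1) = stirling2 m i + (i+1) * stirling2 m (i+1) := rfl
    rw [h]; push_cast; ring
  rw [Finset.sum_congr rfl unfold, Finset.sum_add_distrib]
  rw [Finset.sum_range_succ' (fun i => (-1:ℚ)^i * i.factorial * stirling2 m i) m]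
  rw [Finset.sum_range_succ (fun i => (-1:ℚ)^i * i.factorial * ((i:ℚ)+1) * stirling2 m (i+1)) m]
  have hz : (stirling2 m (m+1) : ℚ) = 0 := by
    rw [stirling2_eq_zero_of_lt m (m+1) (Nat.lt_succ_self m)]; simp
  have hcomb : ∑ i ∈ range m, (-1:ℚ)^(i+1) * (i+1).factorial * stirling2 m (i+1)
      = - ∑ i ∈ range m, (-1:ℚ)^i * i.factorial * ((i:ℚ)+1) * stirling2 m (i+1) := by
    rw [← Finset.sum_neg_distrib]
    apply Finset.sum_congr rfl
    intro i _
    rw [pow_succ, Nat.factorial_succ]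
    push_cast; ring
  simp only [hz, hcomb]
  have h0 : ((stirling2 m 0 : ℕ) : ℚ) = if m = 0 then 1 else 0 := by
    rw [stirling2_zero_right]; split <;> simp
  simp [h0]


/-- Abbreviation for the right-hand side. -/
def Tb (n : ℕ) : ℚ :=
  ∑ i ∈ Finset.range (n + 1), (-1 : ℚ) ^ i * (i.factorial : ℚ) / (i + 1) * stirling2 n i

lemma T_rec (n : ℕ) :
    ∑ k ∈ range (n + 2), ((n+1).choose k : ℚ) * Tb k
      = (if n = 0 then 1 else 0) + Tb (n + 1) := by
  have ext : ∀ k ∈ range (n + 2), ((n+1).choose k : ℚ) * Tb k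
      = ∑ i ∈ range (n + 2),
          ((n+1).choose k : ℚ) * ((-1:ℚ)^i * (i.factorial : ℚ) / (i+1) * stirling2 k i) := by
    intro k hk
    rw [Tb, Finset.mul_sum]
    apply Finset.sum_subset
    · exact Finset.range_subset_range.mpr (by simp only [Finset.mem_range] at hk; omega)
    · intro i _ hi
      simp only [Finset.mem_range, not_lt] at hi
      rw [stirling2_eq_zero_of_lt k i (by omega)]
      simp
  rw [Finset.sum_congr rfl ext, Finset.sum_comm]
  have inner : ∀ i ∈ range (n + 2),
      (∑ k ∈ range (n + 2),
        ((n+1).choose k : ℚ) * ((-1:ℚ)^i * (i.factorial : ℚ) / (i+1) * stirling2 k i))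
      = (-1:ℚ)^i * (i.factorial : ℚ) / (i+1) * stirling2 (n + 2) (i + 1) := by
    intro i _
    have hb : ((∑ k ∈ range (n + 2), (n+1).choose k * stirling2 k i : ℕ) : ℚ)
        = ((stirling2 (n + 2) (i + 1) : ℕ) : ℚ) := by
      exact_mod_cast congrArg (fun x : ℕ => (x : ℚ)) (binom_stirling (n+1) i)
    push_cast at hb
    calc (∑ k ∈ range (n + 2),
            ((n+1).choose k : ℚ) * ((-1:ℚ)^i * (i.factorial : ℚ) / (i+1) * stirling2 k i))
        = (-1:ℚ)^i * (i.factorial : ℚ) / (i+1)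
            * ∑ k ∈ range (n + 2), ((n+1).choose k : ℚ) * (stirling2 k i : ℚ) := by
          rw [Finset.mul_sum]
          exact Finset.sum_congr rfl fun k _ => by ring
      _ = _ := by rw [hb]
  rw [Finset.sum_congr rfl inner]
  have expand : ∀ i ∈ range (n + 2),
      (-1:ℚ)^i * (i.factorial : ℚ) / (i+1) * stirling2 (n + 2) (i + 1)
      = (-1:ℚ)^i * (i.factorial : ℚ) / (i+1) * stirling2 (n + 1) i
        + (-1:ℚ)^i * (i.factorial : ℚ) * stirling2 (n + 1) (i + 1) := by
    intro i _
    have h1 : stirling2 (n + 2) (i + 1)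
        = stirling2 (n + 1) i + (i + 1) * stirling2 (n + 1) (i + 1) := rfl
    have hne : ((i:ℚ) + 1) ≠ 0 := by positivity
    rw [h1]
    push_cast
    field_simp
  rw [Finset.sum_congr rfl expand, Finset.sum_add_distrib]
  have hk2 : ∑ i ∈ range (n + 2), (-1:ℚ)^i * (i.factorial : ℚ) * stirling2 (n + 1) (i + 1)
      = if n = 0 then 1 else 0 := by
    rw [Finset.sum_range_succ, stirling2_eq_zero_of_lt (n+1) (n+1+1) (by omega)]
    simpa using key_sum n
  rw [hk2, Tb]
  ring

theorem stmt6 (n : ℕ) :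
    bernoulli n =
      ∑ i ∈ Finset.range (n + 1), (-1 : ℚ) ^ i * (i.factorial : ℚ) / (i + 1) * stirling2 n i := by
  induction n using Nat.strong_induction_on with
  | _ n ih =>
    show bernoulli n = Tb n
    have h1 := sum_bernoulli (n + 1)
    have h2 : ∑ k ∈ range (n + 1), ((n+1).choose k : ℚ) * Tb k = if n = 0 then 1 else 0 := by
      have h := T_rec n
      rw [Finset.sum_range_succ, Nat.choose_self] at h
      push_cast at h
      linarith
    have h1' : ∑ k ∈ range (n + 1), ((n+1).choose k : ℚ) * bernoulli k
        = if n = 0 then 1 else 0 := by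
      rw [h1]
      by_cases hn : n = 0 <;> simp [hn]
    have h3 : ∑ k ∈ range (n + 1), ((n+1).choose k : ℚ) * (Tb k - bernoulli k) = 0 := by
      have : ∀ k ∈ range (n + 1), ((n+1).choose k : ℚ) * (Tb k - bernoulli k)
          = ((n+1).choose k : ℚ) * Tb k - ((n+1).choose k : ℚ) * bernoulli k :=
        fun k _ => by ring
      rw [Finset.sum_congr rfl this, Finset.sum_sub_distrib, h2, h1']
      ring
    rw [Finset.sum_range_succ] at h3
    have h4 : ∑ k ∈ range n, ((n+1).choose k : ℚ) * (Tb k - bernoulli k) = 0 := by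
      apply Finset.sum_eq_zero
      intro k hk
      have := ih k (Finset.mem_range.mp hk)
      have hTk : Tb k = bernoulli k := by rw [this]; rfl
      rw [hTk]; ring
    rw [h4, zero_add, Nat.choose_succ_self_right] at h3
    have hne : ((n:ℚ) + 1) ≠ 0 := by positivity
    have := mul_eq_zero.mp h3
    rcases this with h | h
    · exfalso; apply hne; exact_mod_cast h
    · linarith
end

section
/- For all positive integers n and k with n >= k, sum_{i=k}^{n} s(n-1, i-1) * S(i, k) / i = (1/n) * binom(n, k) * B_{n-k}^*. -/
open Finset

lemma stirling2_eq_zero_s8 : ∀ i k : ℕ, i < k → stirling2 i k = 0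
  | 0, 0, h => absurd h (lt_irrefl 0)
  | 0, k + 1, _ => rfl
  | i + 1, 0, h => absurd h (Nat.not_lt_zero _)
  | i + 1, k + 1, h => by
    have h1 : i < k := Nat.lt_of_succ_lt_succ h
    have h2 : i < k + 1 := h1.trans (Nat.lt_succ_self k)
    simp [stirling2, stirling2_eq_zero_s8 i k h1, stirling2_eq_zero_s8 i (k+1) h2]

lemma stirling1_eq_zero_s8 : ∀ m j : ℕ, m < j → stirling1 m j = 0
  | 0, 0, h => absurd h (lt_irrefl 0)
  | 0, j + 1, _ => rfl
  | m + 1, 0, h => absurd h (Nat.not_lt_zero _)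
  | m + 1, j + 1, h => by
    have h1 : m < j := Nat.lt_of_succ_lt_succ h
    have h2 : m < j + 1 := h1.trans (Nat.lt_succ_self j)
    simp [stirling1, stirling1_eq_zero_s8 m j h1, stirling1_eq_zero_s8 m (j+1) h2]

lemma sumShift (f : ℕ → ℝ) (k : ℕ) :
    (fwdDiff 1)^[k] f 0 = ∑ j ∈ range (k+1), (-1:ℝ)^(k-j) * (k.choose j) * f j := by
  rw [fwdDiff_iter_eq_sum_shift]
  refine Finset.sum_congr rfl fun j _ => ?_
  have : (0 : ℕ) + j • 1 = j := by simp
  rw [this, zsmul_eq_mul]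
  push_cast
  ring

lemma claim1 (i k : ℕ) :
    (fwdDiff 1)^[k+1] (fun x : ℕ => (x:ℝ)^(i+1)) 0
      = (k+1) * (fwdDiff 1)^[k] (fun x : ℕ => ((x:ℝ)+1)^i) 0 := by
  rw [sumShift, sumShift, Finset.mul_sum, Finset.sum_range_succ']
  have h0 : (-1:ℝ)^(k+1-0) * ((k+1).choose 0) * ((0:ℕ):ℝ)^(i+1) = 0 := by
    simp
  rw [h0, add_zero]
  refine Finset.sum_congr rfl fun j hj => ?_
  have hsub : k + 1 - (j + 1) = k - j := by omega
  have hch : (k+1) * (k.choose j) = (k+1).choose (j+1) * (j+1) := by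
    exact_mod_cast Nat.add_one_mul_choose_eq k j
  have hch' : ((k:ℝ)+1) * (k.choose j) = ((k+1).choose (j+1)) * ((j:ℝ)+1) := by
    exact_mod_cast congrArg (Nat.cast (R := ℝ)) hch
  rw [hsub]
  push_cast
  calc (-1:ℝ)^(k-j) * ((k+1).choose (j+1)) * ((j:ℝ)+1)^(i+1)
      = (-1:ℝ)^(k-j) * (((k+1).choose (j+1)) * ((j:ℝ)+1)) * ((j:ℝ)+1)^i := by ring
    _ = (-1:ℝ)^(k-j) * (((k:ℝ)+1) * (k.choose j)) * ((j:ℝ)+1)^i := by rw [← hch']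
    _ = ((k:ℝ)+1) * ((-1:ℝ)^(k-j) * (k.choose j) * ((j:ℝ)+1)^i) := by ring

lemma claim2 (f : ℕ → ℝ) (k : ℕ) :
    (fwdDiff 1)^[k] (fun x : ℕ => f (x+1)) 0 = (fwdDiff 1)^[k] f 0 + (fwdDiff 1)^[k+1] f 0 := by
  have h : (fun x : ℕ => f (x+1)) = f + fwdDiff 1 f := by
    funext x
    simp [fwdDiff]
  rw [h, fwdDiff_iter_add, Function.iterate_succ_apply]
  rfl

lemma stirling2_fwdDiff : ∀ i k : ℕ,
    (k.factorial : ℝ) * stirling2 i k = (fwdDiff 1)^[k] (fun x : ℕ => (x:ℝ)^i) 0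
  | 0, 0 => by simp [stirling2]
  | 0, k + 1 => by
    have h : (fun x : ℕ => (x:ℝ)^0) = fun _ : ℕ => (1:ℝ) := by funext x; simp
    rw [h, Function.iterate_succ_apply, fwdDiff_const]
    have : (fwdDiff (1:ℕ))^[k] (fun _ : ℕ => (0:ℝ)) = fun _ => (0:ℝ) :=
      Function.iterate_fixed (by rw [fwdDiff_const]) k
    simp [stirling2, this]
  | i + 1, 0 => by simp [stirling2]
  | i + 1, k + 1 => by
    have e1 : (fun x : ℕ => ((x:ℝ)+1)^i) = fun x : ℕ => ((x+1 : ℕ) : ℝ)^i := by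
      funext x; push_cast; ring
    have key : (fwdDiff 1)^[k+1] (fun x : ℕ => (x:ℝ)^(i+1)) 0
        = (k+1) * ((fwdDiff 1)^[k] (fun x : ℕ => (x:ℝ)^i) 0
            + (fwdDiff 1)^[k+1] (fun x : ℕ => (x:ℝ)^i) 0) := by
      rw [claim1, e1, claim2 (fun x : ℕ => (x:ℝ)^i) k]
    rw [key, ← stirling2_fwdDiff i k, ← stirling2_fwdDiff i (k+1)]
    show ((k+1).factorial : ℝ) * (stirling2 i k + (k+1) * stirling2 i (k+1) : ℕ) = _
    rw [Nat.factorial_succ]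
    push_cast
    ring

lemma descPochhammer_eval_eq (m : ℕ) (x : ℝ) :
    (descPochhammer ℝ m).eval x = ∑ j ∈ range (m+1), (stirling1 m j : ℝ) * x^j := by
  induction m with
  | zero => simp [stirling1]
  | succ m ih =>
    have hz : (stirling1 m (m+1) : ℝ) = 0 := by
      rw [stirling1_eq_zero_s8 m (m+1) (Nat.lt_succ_self m)]; norm_num
    rw [descPochhammer_succ_eval, ih,
      Finset.sum_range_succ' (fun j => (stirling1 (m+1) j : ℝ) * x^j) (m+1)]
    have d1 : ∀ j : ℕ, (stirling1 (m+1) (j+1) : ℝ)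
        = (stirling1 m j : ℝ) - (m:ℝ) * (stirling1 m (j+1) : ℝ) := by
      intro j
      rw [show stirling1 (m+1) (j+1) = stirling1 m j - (m:ℤ) * stirling1 m (j+1) from rfl]
      push_cast; ring
    have d0 : (stirling1 (m+1) 0 : ℝ) = -(m:ℝ) * (stirling1 m 0 : ℝ) := by
      rw [show stirling1 (m+1) 0 = -(m:ℤ) * stirling1 m 0 from rfl]
      push_cast; ring
    simp only [d1, d0, pow_zero, mul_one]
    have split : ∑ j ∈ range (m+1), ((stirling1 m j:ℝ) - (m:ℝ)*(stirling1 m (j+1):ℝ)) * x^(j+1)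
        = (∑ j ∈ range (m+1), (stirling1 m j:ℝ) * x^j) * x
          - (m:ℝ) * ∑ j ∈ range (m+1), (stirling1 m (j+1):ℝ) * x^(j+1) := by
      rw [Finset.sum_mul, Finset.mul_sum, ← Finset.sum_sub_distrib]
      exact Finset.sum_congr rfl fun j _ => by ring
    have hB : ∑ j ∈ range (m+1), (stirling1 m (j+1):ℝ) * x^(j+1)
        = ∑ j ∈ range m, (stirling1 m (j+1):ℝ) * x^(j+1) := by
      rw [Finset.sum_range_succ, hz]; ring
    have hA : ∑ j ∈ range m, (stirling1 m (j+1):ℝ) * x^(j+1)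
        = (∑ j ∈ range (m+1), (stirling1 m j:ℝ) * x^j) - (stirling1 m 0 : ℝ) := by
      rw [Finset.sum_range_succ' (fun j => (stirling1 m j:ℝ) * x^j) m]
      simp
    rw [split, hB, hA]
    ring

lemma contPoch (m : ℕ) : Continuous fun t : ℝ => (descPochhammer ℝ m).eval t :=
  (descPochhammer ℝ m).continuous

lemma integral_descPochhammer (m : ℕ) (c : ℝ) :
    ∫ t in (0:ℝ)..c, (descPochhammer ℝ m).eval t
      = ∑ j ∈ range (m+1), (stirling1 m j : ℝ) / (j+1) * c^(j+1) := by
  have h : ∀ t : ℝ, (descPochhammer ℝ m).eval t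
      = ∑ j ∈ range (m+1), (stirling1 m j : ℝ) * t^j := fun t => descPochhammer_eval_eq m t
  rw [intervalIntegral.integral_congr (g := fun t => ∑ j ∈ range (m+1), (stirling1 m j:ℝ) * t^j)
    (fun t _ => h t)]
  rw [intervalIntegral.integral_finset_sum (f := fun j t => (stirling1 m j:ℝ) * t^j) (fun j _ =>
    ((continuous_const.mul (continuous_pow j)).intervalIntegrable _ _))]
  refine Finset.sum_congr rfl fun j _ => ?_
  rw [intervalIntegral.integral_const_mul, integral_pow]
  have : ((0:ℝ))^(j+1) = 0 := by simp
  rw [this]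
  push_cast
  ring

lemma Hstep (m : ℕ) (a b : ℝ) :
    (∫ t in (a+1)..(b+1), (descPochhammer ℝ (m+1)).eval t)
      - ∫ t in a..b, (descPochhammer ℝ (m+1)).eval t
    = ((m:ℝ)+1) * ∫ t in a..b, (descPochhammer ℝ m).eval t := by
  have c1 : Continuous fun t : ℝ => (descPochhammer ℝ (m+1)).eval (t+1) :=
    (contPoch (m+1)).comp (continuous_id.add continuous_const)
  rw [← intervalIntegral.integral_comp_add_right (fun t => (descPochhammer ℝ (m+1)).eval t) 1,
    ← intervalIntegral.integral_sub (c1.intervalIntegrable _ _)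
      ((contPoch (m+1)).intervalIntegrable _ _),
    ← intervalIntegral.integral_const_mul]
  refine intervalIntegral.integral_congr fun t _ => ?_
  have e1 : (descPochhammer ℝ (m+1)).eval (t+1) = (t+1) * (descPochhammer ℝ m).eval t := by
    rw [descPochhammer_succ_left]
    simp [Polynomial.eval_comp]
  rw [e1, descPochhammer_succ_eval]
  push_cast
  ring

lemma Hiter : ∀ k m : ℕ, k ≤ m →
    (fwdDiff 1)^[k] (fun j : ℕ => ∫ t in (j:ℝ)..((j:ℝ)+1), (descPochhammer ℝ m).eval t) 0
      = (m.descFactorial k : ℝ) * bernoulliStar (m-k) := by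
  intro k
  induction k with
  | zero =>
    intro m _
    simp only [Function.iterate_zero, id_eq, Nat.descFactorial_zero, Nat.cast_one, one_mul,
      Nat.sub_zero, Nat.cast_zero, zero_add, bernoulliStar]
  | succ k ih =>
    intro m hm
    obtain ⟨m', rfl⟩ : ∃ m', m = m' + 1 := ⟨m - 1, by omega⟩
    rw [Function.iterate_succ_apply]
    have hd : fwdDiff 1 (fun j : ℕ => ∫ t in (j:ℝ)..((j:ℝ)+1), (descPochhammer ℝ (m'+1)).eval t)
        = ((m':ℝ)+1) • fun j : ℕ => ∫ t in (j:ℝ)..((j:ℝ)+1), (descPochhammer ℝ m').eval t := by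
      funext j
      show (∫ t in ((j+1:ℕ):ℝ)..(((j+1:ℕ):ℝ)+1), (descPochhammer ℝ (m'+1)).eval t)
          - (∫ t in (j:ℝ)..((j:ℝ)+1), (descPochhammer ℝ (m'+1)).eval t) = _
      push_cast
      rw [show (j:ℝ)+1+1 = ((j:ℝ)+1)+1 from by ring]
      rw [Hstep m' (j:ℝ) ((j:ℝ)+1)]
      rfl
    rw [hd, fwdDiff_iter_const_smul, Pi.smul_apply, ih m' (by omega), smul_eq_mul,
      Nat.succ_descFactorial_succ, Nat.succ_sub_succ]
    push_cast
    ring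

theorem stmt8 (n k : ℕ) (hn : 0 < n) (hk : 0 < k) (hkn : k ≤ n) :
    ∑ i ∈ Finset.Icc k n, (stirling1 (n - 1) (i - 1) : ℝ) * (stirling2 i k : ℝ) / i =
      1 / n * (n.choose k : ℝ) * bernoulliStar (n - k) := by
  obtain ⟨N, rfl⟩ : ∃ N, n = N + 1 := ⟨n - 1, by omega⟩
  obtain ⟨K, rfl⟩ : ∃ K, k = K + 1 := ⟨k - 1, by omega⟩
  have hKN : K ≤ N := by omega
  simp only [Nat.add_sub_cancel]
  set k := K + 1
  set n := N + 1
  -- step 1 : restrict/reindex the sum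
  have h1 : ∑ i ∈ Finset.Icc k n, (stirling1 N (i - 1) : ℝ) * (stirling2 i k : ℝ) / i
      = ∑ m ∈ range n, (stirling1 N m : ℝ) * (stirling2 (m+1) k : ℝ) / ((m:ℝ)+1) := by
    rw [Finset.sum_subset (Finset.Icc_subset_Icc_left hk)
      (fun i hi hni => by
        have hik : i < k := by
          simp only [Finset.mem_Icc] at hi hni; omega
        simp [stirling2_eq_zero_s8 i k hik])]
    rw [← Finset.Ico_add_one_right_eq_Icc, Finset.sum_Ico_eq_sum_range]
    refine Finset.sum_congr rfl fun m _ => ?_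
    have e1 : 1 + m - 1 = m := by omega
    have e2 : 1 + m = m + 1 := by omega
    rw [e1, e2]
    push_cast
    ring
  -- the cumulative-integral function
  set F : ℕ → ℝ := fun x => ∫ t in (0:ℝ)..(x:ℝ), (descPochhammer ℝ N).eval t with hF
  have hFsum : ∀ x : ℕ, ∑ m ∈ range n, ((stirling1 N m : ℝ)/((m:ℝ)+1)) * ((x:ℕ):ℝ)^(m+1) = F x := by
    intro x
    show _ = ∫ t in (0:ℝ)..(x:ℝ), (descPochhammer ℝ N).eval t
    rw [integral_descPochhammer N (x:ℝ)]
  -- key identity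
  have key : (k.factorial : ℝ) *
      (∑ i ∈ Finset.Icc k n, (stirling1 N (i - 1) : ℝ) * (stirling2 i k : ℝ) / i)
      = (N.descFactorial K : ℝ) * bernoulliStar (n - k) := by
    rw [h1, Finset.mul_sum]
    have h2 : ∀ m ∈ range n, (k.factorial : ℝ) * ((stirling1 N m : ℝ) * (stirling2 (m+1) k : ℝ) / ((m:ℝ)+1))
        = ((stirling1 N m : ℝ)/((m:ℝ)+1)) * (fwdDiff 1)^[k] (fun y : ℕ => (y:ℝ)^(m+1)) 0 := by
      intro m _
      rw [← stirling2_fwdDiff (m+1) k]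
      ring
    rw [Finset.sum_congr rfl h2]
    have h3 : ∑ m ∈ range n, ((stirling1 N m : ℝ)/((m:ℝ)+1)) * (fwdDiff 1)^[k] (fun y : ℕ => (y:ℝ)^(m+1)) 0
        = (fwdDiff 1)^[k] (∑ m ∈ range n, ((stirling1 N m : ℝ)/((m:ℝ)+1)) • (fun y : ℕ => (y:ℝ)^(m+1))) 0 := by
      rw [fwdDiff_iter_finset_sum, Finset.sum_apply]
      exact (Finset.sum_congr rfl fun m _ => by
        rw [fwdDiff_iter_const_smul, Pi.smul_apply, smul_eq_mul]).symm
    rw [h3]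
    have h4 : (∑ m ∈ range n, ((stirling1 N m : ℝ)/((m:ℝ)+1)) • (fun y : ℕ => (y:ℝ)^(m+1))) = F := by
      funext x
      rw [Finset.sum_apply, ← hFsum x]
      simp only [Pi.smul_apply, smul_eq_mul]
    rw [h4]
    have h5 : fwdDiff 1 F = fun j : ℕ => ∫ t in (j:ℝ)..((j:ℝ)+1), (descPochhammer ℝ N).eval t := by
      funext j
      show F (j+1) - F j = _
      rw [hF]
      have : (((j+1:ℕ)):ℝ) = (j:ℝ) + 1 := by push_cast; ring
      simp only [this]
      exact intervalIntegral.integral_interval_sub_left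
        ((contPoch N).intervalIntegrable _ _) ((contPoch N).intervalIntegrable _ _)
    rw [show k = K + 1 from rfl, Function.iterate_succ_apply, h5, Hiter K N hKN]
    have : N - K = n - k := by omega
    rw [this]
  -- final arithmetic
  have hnat : k.factorial * n.choose k = n * N.descFactorial K := by
    have h6 : n.descFactorial k = k.factorial * n.choose k :=
      Nat.descFactorial_eq_factorial_mul_choose n k
    have h7 : n.descFactorial k = n * N.descFactorial K :=
      Nat.succ_descFactorial_succ N K
    omega
  have hk0 : (k.factorial : ℝ) ≠ 0 := by positivity
  have hn0 : (n : ℝ) ≠ 0 := by positivity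
  apply mul_left_cancel₀ hk0
  rw [key]
  have hc : (k.factorial : ℝ) * (n.choose k : ℝ) = (n:ℝ) * (N.descFactorial K : ℝ) := by
    exact_mod_cast hnat
  field_simp
  linear_combination (-bernoulliStar (n - k)) * hc
end
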